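/- Let v ∈ ℝ³ be a covered vertex of a covering sphere packing with polyhedron P_v whose faces Q_{v u_1}, ..., Q_{v u_n} lie in the common tangent planes to the neighbors u_1, ..., u_n, so that the outward unit normal of Q_{v u_i} is (u_i − v)/‖u_i − v‖. Define weights c_{v u_i} = Area(Q_{v u_i})/‖u_i − v‖ and π(v) = Σ_i c_{v u_i}. Then Σ_{i=1}^n (c_{v u_i}/π(v)) (u_i − v) = 0; hence the weighted random walk on the sphere centers is a martingale. -/

import Mathlib

open MeasureTheory RealInnerProductSpace

open Pointwise NNReal ENNReal
set_option maxHeartbeats 2000000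
noncomputable section
abbrev E3 := EuclideanSpace ℝ (Fin 3)
abbrev F2 := EuclideanSpace ℝ (Fin 2)
abbrev Pi2 := Fin 2 → ℝ

def Phi (b : OrthonormalBasis (Fin 3) ℝ E3) : E3 ≃ᵐ ℝ × Pi2 :=
  (b.measurableEquiv.trans (MeasurableEquiv.toLp 2 (Fin 3 → ℝ)).symm).trans
    (MeasurableEquiv.piFinSuccAbove (fun _ => ℝ) 0)

lemma Phi_apply (b : OrthonormalBasis (Fin 3) ℝ E3) (x : E3) :
    Phi b x = (b.repr x 0, fun i => b.repr x i.succ) := by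
  show (MeasurableEquiv.piFinSuccAbove (fun _ => ℝ) 0)
      ((MeasurableEquiv.toLp 2 (Fin 3 → ℝ)).symm (b.measurableEquiv x)) = _
  ext i
  · rfl
  · show Fin.tail ((WithLp.equiv 2 (Fin 3 → ℝ)) (b.repr x)) i = b.repr x i.succ
    rfl

lemma Phi_symm_apply (b : OrthonormalBasis (Fin 3) ℝ E3) (s : ℝ) (y : Pi2) :
    (Phi b).symm (s, y) = b.repr.symm ((WithLp.equiv 2 (Fin 3 → ℝ)).symm (Fin.cons s y)) := by
  apply (Phi b).injective
  rw [MeasurableEquiv.apply_symm_apply, Phi_apply]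
  have h : ∀ l, b.repr (b.repr.symm ((WithLp.equiv 2 (Fin 3 → ℝ)).symm (Fin.cons s y))) l
      = (Fin.cons s y : Fin 3 → ℝ) l := by
    intro l
    rw [LinearIsometryEquiv.apply_symm_apply]
    rfl
  ext i
  · simpa using h 0
  · simpa using h i.succ

lemma slice_isometry (b : OrthonormalBasis (Fin 3) ℝ E3) (s : ℝ) :
    Isometry (fun yF : F2 => (Phi b).symm (s, (WithLp.equiv 2 Pi2) yF)) := by
  apply Isometry.of_dist_eq
  intro y y'
  simp only [Phi_symm_apply]
  rw [LinearIsometryEquiv.dist_map]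
  rw [EuclideanSpace.dist_eq, EuclideanSpace.dist_eq]
  congr 1
  rw [Fin.sum_univ_succ]
  simp [Fin.cons_zero, Fin.cons_succ]

lemma face_muH (b : OrthonormalBasis (Fin 3) ℝ E3) (C : ℝ≥0)
    (hC : (μH[2] : Measure F2) = C • (volume : Measure F2))
    (s : ℝ) (K : Set Pi2) (hK : MeasurableSet K) :
    μH[2] ((Phi b) ⁻¹' ({s} ×ˢ K)) = C * volume K := by
  have himg : (Phi b) ⁻¹' ({s} ×ˢ K)
      = (fun yF : F2 => (Phi b).symm (s, (WithLp.equiv 2 Pi2) yF)) ''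
        ((MeasurableEquiv.toLp 2 (Fin 2 → ℝ)).symm ⁻¹' K) := by
    ext x
    simp only [Set.mem_preimage, Set.mem_image, Set.mem_prod, Set.mem_singleton_iff]
    constructor
    · rintro ⟨h1, h2⟩
      refine ⟨(MeasurableEquiv.toLp 2 (Fin 2 → ℝ)).symm.symm ((Phi b) x).2, by simpa using h2, ?_⟩
      have : (WithLp.equiv 2 Pi2) ((MeasurableEquiv.toLp 2 (Fin 2 → ℝ)).symm.symm ((Phi b) x).2)
          = ((Phi b) x).2 := rfl
      rw [this, ← h1]
      exact (Phi b).symm_apply_apply x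
    · rintro ⟨yF, hyF, rfl⟩
      rw [MeasurableEquiv.apply_symm_apply]
      exact ⟨rfl, hyF⟩
  rw [himg, (slice_isometry b s).hausdorffMeasure_image (Or.inl (by norm_num))]
  rw [hC]
  simp only [Measure.smul_apply, smul_eq_mul]
  congr 1
  exact (EuclideanSpace.volume_preserving_symm_measurableEquiv_toLp (Fin 2)).measure_preimage
    hK.nullMeasurableSet
lemma Phi_measurePreserving (b : OrthonormalBasis (Fin 3) ℝ E3) :
    MeasurePreserving (Phi b) volume volume := by
  have h1 := b.measurePreserving_measurableEquiv
  have h2 := EuclideanSpace.volume_preserving_symm_measurableEquiv_toLp (Fin 3)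
  have h3 := measurePreserving_piFinSuccAbove (fun _ : Fin 3 => (volume : Measure ℝ)) 0
  rw [← volume_pi] at h3
  have hpi2 : (Measure.pi fun _ : Fin 2 => (volume : Measure ℝ)) = volume := volume_pi.symm
  have hprod : ((volume : Measure ℝ).prod (Measure.pi fun _ : Fin 2 => (volume : Measure ℝ)))
      = (volume : Measure (ℝ × Pi2)) := by
    rw [hpi2, ← Measure.volume_eq_prod]
  rw [hprod] at h3
  exact (h3.comp h2).comp h1

lemma inner_phi (b : OrthonormalBasis (Fin 3) ℝ E3) (v x : E3) :
    ⟪v, x⟫ = b.repr v 0 * (Phi b x).1 + ∑ i : Fin 2, b.repr v i.succ * (Phi b x).2 i := by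
  rw [Phi_apply]
  have : ⟪v, x⟫ = ⟪b.repr v, b.repr x⟫ := (b.repr.inner_map_map v x).symm
  rw [this, PiLp.inner_apply]
  simp [Fin.sum_univ_succ, RCLike.inner_apply]
  ring


lemma exists_basis (ν : E3) (hν : ‖ν‖ = 1) :
    ∃ b : OrthonormalBasis (Fin 3) ℝ E3, b 0 = ν := by
  have hcard : Module.finrank ℝ E3 = Fintype.card (Fin 3) := by simp
  have horth : Orthonormal ℝ (({0} : Set (Fin 3)).restrict (fun _ : Fin 3 => ν)) := by
    constructor
    · intro i; exact hν
    · intro i j hij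
      exact absurd (Subsingleton.elim i j) hij
  obtain ⟨b, hb⟩ := horth.exists_orthonormalBasis_extension_of_card_eq hcard
  exact ⟨b, hb 0 rfl⟩

lemma volume_hyperplane (m : Pi2) (hm : m ≠ 0) (r : ℝ) :
    volume {y : Pi2 | ∑ i, m i * y i = r} = 0 := by
  have hmp := EuclideanSpace.volume_preserving_symm_measurableEquiv_toLp (Fin 2)
  have hmeas : MeasurableSet {y : Pi2 | ∑ i, m i * y i = r} := by
    have : Continuous fun y : Pi2 => ∑ i, m i * y i := by continuity
    exact this.measurable (measurableSet_singleton r)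
  rw [← hmp.measure_preimage hmeas.nullMeasurableSet]
  have hset : (MeasurableEquiv.toLp 2 (Fin 2 → ℝ)).symm ⁻¹' {y : Pi2 | ∑ i, m i * y i = r}
      = {y : F2 | ⟪(WithLp.equiv 2 Pi2).symm m, y⟫ = r} := by
    ext y
    simp only [Set.mem_preimage, Set.mem_setOf_eq, PiLp.inner_apply, RCLike.inner_apply,
      conj_trivial]
    constructor <;> intro h <;> rw [← h] <;> exact Finset.sum_congr rfl fun i _ => mul_comm _ _
  rw [hset]
  set mF : F2 := (WithLp.equiv 2 Pi2).symm m with hmFdef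
  have hmF : mF ≠ 0 := by
    intro h
    apply hm
    have := (WithLp.equiv 2 Pi2).symm.injective (a₁ := m) (a₂ := 0)
    simpa using this (by rw [← hmFdef, h]; rfl)
  have hsub : {y : F2 | ⟪mF, y⟫ = r}
      = ((r / ‖mF‖^2) • mF) +ᵥ ((ℝ ∙ mF)ᗮ : Set F2) := by
    ext y
    simp only [Set.mem_setOf_eq, Set.mem_vadd_set, vadd_eq_add, SetLike.mem_coe]
    constructor
    · intro hy
      refine ⟨y - (r / ‖mF‖^2) • mF, ?_, by abel⟩
      rw [Submodule.mem_orthogonal_singleton_iff_inner_right]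
      rw [inner_sub_right, real_inner_smul_right, hy, real_inner_self_eq_norm_sq]
      have : ‖mF‖ ≠ 0 := norm_ne_zero_iff.mpr hmF
      field_simp
      ring
    · rintro ⟨z, hz, rfl⟩
      rw [Submodule.mem_orthogonal_singleton_iff_inner_right] at hz
      rw [inner_add_right, hz, real_inner_smul_right, real_inner_self_eq_norm_sq]
      have : ‖mF‖ ≠ 0 := norm_ne_zero_iff.mpr hmF
      field_simp
      ring
  rw [hsub, measure_vadd]
  exact Measure.addHaar_submodule _ _ (by
    intro htop
    have := htop ▸ Submodule.mem_top (x := mF)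
    rw [Submodule.mem_orthogonal_singleton_iff_inner_right] at this
    exact hmF (inner_self_eq_zero.mp this))

lemma exists_haar_factor : ∃ C : ℝ≥0, (μH[2] : Measure F2) = C • (volume : Measure F2) := by
  have hfr : ((Module.finrank ℝ F2 : ℕ) : ℝ) = 2 := by simp
  have h2 : Measure.IsAddHaarMeasure (μH[((Module.finrank ℝ F2 : ℕ) : ℝ)] : Measure F2) :=
    inferInstance
  rw [hfr] at h2
  exact ⟨_, Measure.isAddLeftInvariant_eq_smul μH[2] volume⟩
theorem core (n : ℕ) (N : Fin n → E3) (d : Fin n → ℝ) (hN : ∀ i, ‖N i‖ = 1)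
    (hinj : Function.Injective fun i => (N i, d i))
    (hbdd : Bornology.IsBounded (⋂ i, {x : E3 | ⟪N i, x⟫ ≤ d i}))
    (hint : (interior (⋂ i, {x : E3 | ⟪N i, x⟫ ≤ d i})).Nonempty) :
    ∑ i, (μH[2] ((⋂ k, {x : E3 | ⟪N k, x⟫ ≤ d k}) ∩ {x | ⟪N i, x⟫ = d i})).toReal • N i = 0 := by
  rcases Nat.eq_zero_or_pos n with hn | hn
  · subst hn; simp
  haveI : Nonempty (Fin n) := ⟨⟨0, hn⟩⟩
  set P : Set E3 := ⋂ i, {x : E3 | ⟪N i, x⟫ ≤ d i} with hPdef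
  obtain ⟨C, hC⟩ := exists_haar_factor
  -- continuity/measurability of inner functionals
  have hinnercont : ∀ v : E3, Continuous fun x : E3 => ⟪v, x⟫ :=
    fun v => continuous_const.inner continuous_id
  have hPclosed : IsClosed P :=
    isClosed_iInter fun i => isClosed_le (hinnercont (N i)) continuous_const
  have hPmeas : MeasurableSet P := hPclosed.measurableSet
  -- interior point with margin
  obtain ⟨xb, hxb⟩ := hint
  have hxbP : xb ∈ P := interior_subset hxb
  have hstrict : ∀ i, ⟪N i, xb⟫ < d i := by
    intro i
    have hsub : interior P ⊆ interior {x : E3 | ⟪N i, x⟫ ≤ d i} :=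
      interior_mono (Set.iInter_subset _ i)
    have hx : xb ∈ interior {x : E3 | ⟪N i, x⟫ ≤ d i} := hsub hxb
    rw [mem_interior_iff_mem_nhds, Metric.mem_nhds_iff] at hx
    obtain ⟨ε, hε, hball⟩ := hx
    have hz : xb + (ε / 2) • N i ∈ {x : E3 | ⟪N i, x⟫ ≤ d i} := by
      apply hball
      rw [Metric.mem_ball, dist_eq_norm]
      simp only [add_sub_cancel_left, norm_smul, hN i, mul_one]
      rw [Real.norm_eq_abs, abs_of_nonneg (by linarith)]
      linarith
    simp only [Set.mem_setOf_eq, inner_add_right, real_inner_smul_right, hN i] at hz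
    have hNi : ⟪N i, N i⟫ = 1 := by
      rw [real_inner_self_eq_norm_sq, hN i]; norm_num
    rw [hNi] at hz
    linarith
  set ρ : ℝ := Finset.univ.inf' Finset.univ_nonempty fun i => d i - ⟪N i, xb⟫ with hρdef
  have hρpos : 0 < ρ := by
    rw [hρdef, Finset.lt_inf'_iff]
    intro i _
    linarith [hstrict i]
  have hρi : ∀ i, ⟪N i, xb⟫ ≤ d i - ρ := by
    intro i
    have := Finset.inf'_le (f := fun i => d i - ⟪N i, xb⟫) (Finset.mem_univ i)
    linarith [this]
  -- bounding radius
  obtain ⟨R, hR⟩ := hbdd.subset_closedBall 0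
  set R₂ : ℝ := ‖xb‖ + 2 * (R + ‖xb‖) with hR₂def
  have hbound : ∀ ε : ℝ, 0 ≤ ε → ε ≤ ρ → ∀ x : E3, (∀ i, ⟪N i, x⟫ ≤ d i + ε) → ‖x‖ ≤ R₂ := by
    intro ε hε0 hερ x hx
    set lam : ℝ := ρ / (ρ + ε) with hlamdef
    have hρε : 0 < ρ + ε := by linarith
    have hlam0 : 0 < lam := div_pos hρpos hρε
    have hlam1 : lam ≤ 1 := by
      rw [hlamdef, div_le_one hρε]; linarith
    set y : E3 := xb + lam • (x - xb) with hydef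
    have hyP : y ∈ P := by
      rw [hPdef]
      refine Set.mem_iInter.mpr fun i => ?_
      have h1 : ⟪N i, y⟫ = ⟪N i, xb⟫ + lam * (⟪N i, x⟫ - ⟪N i, xb⟫) := by
        rw [hydef, inner_add_right, real_inner_smul_right, inner_sub_right]
      have h2 : ⟪N i, xb⟫ ≤ d i - ρ := hρi i
      have h3 : ⟪N i, x⟫ ≤ d i + ε := hx i
      have hlm : lam * (ρ + ε) = ρ := div_mul_cancel₀ ρ hρε.ne'
      show ⟪N i, y⟫ ≤ d i
      rw [h1]
      nlinarith [hlam0, hlam1]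
    have hyR : ‖y‖ ≤ R := by
      have := hR hyP
      rwa [Metric.mem_closedBall, dist_zero_right] at this
    have hxy : x = xb + lam⁻¹ • (y - xb) := by
      rw [hydef]
      simp only [add_sub_cancel_left, smul_smul, inv_mul_cancel₀ hlam0.ne', one_smul]
      abel
    have hlaminv : lam⁻¹ ≤ 2 := by
      rw [hlamdef, inv_div, div_le_iff₀ hρpos]
      linarith
    calc ‖x‖ = ‖xb + lam⁻¹ • (y - xb)‖ := by rw [← hxy]
      _ ≤ ‖xb‖ + lam⁻¹ * ‖y - xb‖ := by
          refine (norm_add_le _ _).trans ?_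
          rw [norm_smul, Real.norm_eq_abs, abs_of_pos (inv_pos.mpr hlam0)]
      _ ≤ ‖xb‖ + 2 * (R + ‖xb‖) := by
          have h1 : ‖y - xb‖ ≤ R + ‖xb‖ := (norm_sub_le _ _).trans (by linarith)
          have h2 : (0:ℝ) ≤ ‖y - xb‖ := norm_nonneg _
          nlinarith [inv_pos.mpr hlam0]
      _ = R₂ := by rw [hR₂def]
  -- bases adapted to each face
  have hbex : ∀ j : Fin n, ∃ b : OrthonormalBasis (Fin 3) ℝ E3, b 0 = N j :=
    fun j => exists_basis (N j) (hN j)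
  choose b hb using hbex
  -- linear coordinates of the constraints
  set lin : Fin n → Fin n → ℝ × Pi2 → ℝ :=
    fun j k p => (b j).repr (N k) 0 * p.1 + ∑ i : Fin 2, (b j).repr (N k) i.succ * p.2 i
    with hlindef
  have hlincont : ∀ j k, Continuous (lin j k) := by
    intro j k
    exact (continuous_const.mul continuous_fst).add
      (continuous_finset_sum _ fun i _ =>
        continuous_const.mul ((continuous_apply i).comp continuous_snd))
  have hlin : ∀ j k (x : E3), ⟪N k, x⟫ = lin j k (Phi (b j) x) := fun j k x => inner_phi _ _ _
  have hlinj : ∀ j (p : ℝ × Pi2), lin j j p = p.1 := by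
    intro j p
    have h1 : (b j).repr (N j) = EuclideanSpace.single 0 1 := by
      rw [← hb j]; exact (b j).repr_self 0
    rw [hlindef]
    simp only [h1, EuclideanSpace.single_apply]
    simp [Fin.succ_ne_zero]
  have hlinlip : ∀ j k (s s' : ℝ) (y : Pi2), lin j k (s', y) ≤ lin j k (s, y) + |s' - s| := by
    intro j k s s' y
    have hc : |(b j).repr (N k) 0| ≤ 1 := by
      have h1 : (b j).repr (N k) 0 = ⟪b j 0, N k⟫ := (b j).repr_apply_apply (N k) 0
      rw [h1, hb j]
      have := abs_real_inner_le_norm (N j) (N k)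
      rwa [hN j, hN k, one_mul] at this
    have hexp : lin j k (s', y) - lin j k (s, y) = (b j).repr (N k) 0 * (s' - s) := by
      rw [hlindef]; ring
    have h2 : (b j).repr (N k) 0 * (s' - s) ≤ |s' - s| := by
      calc (b j).repr (N k) 0 * (s' - s) ≤ |(b j).repr (N k) 0 * (s' - s)| := le_abs_self _
        _ = |(b j).repr (N k) 0| * |s' - s| := abs_mul _ _
        _ ≤ 1 * |s' - s| := by
            exact mul_le_mul_of_nonneg_right hc (abs_nonneg _)
        _ = |s' - s| := one_mul _
    linarith
  -- the 2D slice sets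
  set K : Fin n → ℝ → ℝ → Set Pi2 :=
    fun j ε s => {y : Pi2 | ∀ k, k ≠ j → lin j k (s, y) ≤ d k + ε} with hKdef
  have hKmeas : ∀ j ε s, MeasurableSet (K j ε s) := by
    intro j ε s
    have : K j ε s = ⋂ k, ⋂ (_ : k ≠ j), {y : Pi2 | lin j k (s, y) ≤ d k + ε} := by
      ext y; simp [hKdef]
    rw [this]
    refine MeasurableSet.iInter fun k => MeasurableSet.iInter fun _ => ?_
    exact (isClosed_le ((hlincont j k).comp (Continuous.prodMk_right s)) continuous_const).measurableSet
  have hKsub : ∀ j (ε ε' s s' : ℝ), ε + |s' - s| ≤ ε' → K j ε s ⊆ K j ε' s' := by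
    intro j ε ε' s s' h y hy k hkj
    calc lin j k (s', y) ≤ lin j k (s, y) + |s' - s| := hlinlip j k s s' y
    _ ≤ d k + ε + |s' - s| := by linarith [hy k hkj]
    _ ≤ d k + ε' := by linarith
  -- membership of preimages
  have hPhiP : ∀ j (x : E3), ((Phi (b j)) x).1 = ⟪N j, x⟫ := by
    intro j x
    rw [hlin j j x, hlinj]
  -- boundedness of slices
  have hKbox : ∀ j (δ : ℝ), 0 ≤ δ → δ ≤ ρ →
      K j δ (d j) ⊆ Set.univ.pi fun _ : Fin 2 => Set.Icc (-R₂) R₂ := by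
    intro j δ h0 hδ y hy
    set x : E3 := (Phi (b j)).symm (d j, y) with hxdef
    have hPhix : Phi (b j) x = (d j, y) := (Phi (b j)).apply_symm_apply _
    have hxcon : ∀ i, ⟪N i, x⟫ ≤ d i + δ := by
      intro i
      rw [hlin j i x, hPhix]
      rcases eq_or_ne i j with rfl | hij
      · rw [hlinj]; simp; linarith
      · exact hy i hij
    have hxR : ‖x‖ ≤ R₂ := hbound δ h0 hδ x hxcon
    intro i _
    have hyi : y i = (b j).repr x i.succ := by
      have := congrArg Prod.snd hPhix
      rw [Phi_apply] at this
      exact (congrFun this i).symm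
    have habs : |y i| ≤ ‖x‖ := by
      rw [hyi, (b j).repr_apply_apply x i.succ]
      have h2 := abs_real_inner_le_norm (b j i.succ) x
      rwa [(b j).orthonormal.1 i.succ, one_mul] at h2
    rw [Set.mem_Icc]
    constructor <;> [linarith [neg_abs_le (y i)]; linarith [le_abs_self (y i)]]
  have hKfin : ∀ j (δ : ℝ), δ ≤ ρ → volume (K j δ (d j)) < ⊤ := by
    intro j δ hδ
    have h1 : K j δ (d j) ⊆ K j ρ (d j) := hKsub j δ ρ (d j) (d j) (by simp [hρpos.le]; linarith)
    refine lt_of_le_of_lt (measure_mono (h1.trans (hKbox j ρ hρpos.le le_rfl))) ?_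
    rw [volume_pi_pi]
    simp [Real.volume_Icc]
  set J : Fin n → ℝ → ℝ≥0∞ := fun j δ => volume (K j δ (d j)) with hJdef
  set A : Fin n → ℝ := fun j => (J j 0).toReal with hAdef
  -- face measure identity
  have hface : ∀ j, μH[2] (P ∩ {x : E3 | ⟪N j, x⟫ = d j}) = C * J j 0 := by
    intro j
    have hset : P ∩ {x : E3 | ⟪N j, x⟫ = d j}
        = (Phi (b j)) ⁻¹' ({d j} ×ˢ K j 0 (d j)) := by
      ext x
      simp only [Set.mem_inter_iff, Set.mem_preimage, Set.mem_prod, Set.mem_singleton_iff,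
        hPdef, Set.mem_iInter, Set.mem_setOf_eq]
      constructor
      · rintro ⟨h1, h2⟩
        have hfst : ((Phi (b j)) x).1 = d j := by rw [hPhiP j x]; exact h2
        refine ⟨hfst, fun k hkj => ?_⟩
        have heta : ((d j : ℝ), ((Phi (b j)) x).2) = (Phi (b j)) x := by
          rw [← hfst]
        rw [heta, ← hlin j k x]
        simpa using h1 k
      · rintro ⟨h1, h2⟩
        have hfst : ⟪N j, x⟫ = d j := by rw [← hPhiP j x]; exact h1
        refine ⟨fun k => ?_, hfst⟩
        rcases eq_or_ne k j with rfl | hkj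
        · exact le_of_eq hfst
        · have := h2 k hkj
          have heta : ((d j : ℝ), ((Phi (b j)) x).2) = (Phi (b j)) x := by
            rw [← h1]
          rw [heta, ← hlin j k x] at this
          simpa using this
    rw [hset]
    exact face_muH (b j) C hC (d j) _ (hKmeas j 0 (d j))
  -- approximate continuity of slice areas
  have hJmono : ∀ j (δ δ' : ℝ), δ ≤ δ' → J j δ ≤ J j δ' := by
    intro j δ δ' h
    exact measure_mono (hKsub j δ δ' (d j) (d j) (by simp; linarith))
  have hupper : ∀ j, ∀ η : ℝ, 0 < η → ∃ δ : ℝ, 0 < δ ∧ δ ≤ ρ ∧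
      J j δ ≤ J j 0 + ENNReal.ofReal η := by
    intro j η hη
    have hanti : Antitone fun m : ℕ => K j (ρ / (m + 1)) (d j) := by
      intro m m' hmm
      apply hKsub
      simp only [sub_self, abs_zero, add_zero]
      apply div_le_div_of_nonneg_left hρpos.le (by positivity)
      exact_mod_cast by linarith [(Nat.cast_le (α := ℝ)).mpr hmm]
    have hiInter : ⋂ m : ℕ, K j (ρ / (m + 1)) (d j) = K j 0 (d j) := by
      apply Set.Subset.antisymm
      · intro y hy k hkj
        rw [Set.mem_iInter] at hy
        have hforall : ∀ ε : ℝ, 0 < ε → lin j k (d j, y) ≤ d k + 0 + ε := by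
          intro ε hε
          obtain ⟨m, hm⟩ := exists_nat_gt (ρ / ε)
          have h1 : ρ / (m + 1) < ε := by
            rw [div_lt_iff₀ (by positivity)]
            have h2 : ρ / ε < m + 1 := by linarith
            rw [div_lt_iff₀ hε] at h2
            linarith
          refine le_trans (hy m k hkj) ?_
          linarith
        have := le_of_forall_pos_le_add hforall
        simpa using this
      · intro y hy
        refine Set.mem_iInter.mpr fun m => ?_
        exact hKsub j 0 (ρ / (m + 1)) (d j) (d j) (by simp; positivity) hy
    have htend := tendsto_measure_iInter_atTop
      (s := fun m : ℕ => K j (ρ / (m + 1)) (d j))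
      (fun m => (hKmeas j (ρ / (m + 1)) (d j)).nullMeasurableSet) hanti
      ⟨0, by
        refine (lt_of_le_of_lt (measure_mono ?_) (hKfin j ρ le_rfl)).ne
        apply hKsub
        simp⟩
    rw [hiInter] at htend
    have hlt : J j 0 < J j 0 + ENNReal.ofReal η :=
      ENNReal.lt_add_right (hKfin j 0 hρpos.le).ne (by simp [hη])
    obtain ⟨m, hm⟩ := (htend.eventually_lt_const hlt).exists
    refine ⟨ρ / (m + 1), by positivity, ?_, hm.le⟩
    rw [div_le_iff₀ (by positivity)]
    nlinarith [Nat.cast_nonneg (α := ℝ) m, hρpos]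
  have hlower : ∀ j, ∀ η : ℝ, 0 < η → ∃ δ : ℝ, 0 < δ ∧ δ ≤ ρ ∧
      J j 0 ≤ J j (-δ) + ENNReal.ofReal η := by
    intro j η hη
    set Kc : Set Pi2 := {y | ∀ k, k ≠ j → lin j k (d j, y) < d k} with hKcdef
    have hmono : Monotone fun m : ℕ => K j (-(ρ / (m + 1))) (d j) := by
      intro m m' hmm
      apply hKsub
      simp only [sub_self, abs_zero, add_zero, neg_le_neg_iff]
      apply div_le_div_of_nonneg_left hρpos.le (by positivity)
      exact_mod_cast by linarith [(Nat.cast_le (α := ℝ)).mpr hmm]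
    have hiUnion : ⋃ m : ℕ, K j (-(ρ / (m + 1))) (d j) = Kc := by
      apply Set.Subset.antisymm
      · intro y hy
        rw [Set.mem_iUnion] at hy
        obtain ⟨m, hm⟩ := hy
        intro k hkj
        have hpos : (0:ℝ) < ρ / (m + 1) := by positivity
        calc lin j k (d j, y) ≤ d k + -(ρ / (m + 1)) := hm k hkj
          _ < d k := by linarith
      · intro y hy
        rw [Set.mem_iUnion]
        set m : ℕ := Finset.univ.sup fun k => ⌈ρ / (d k - lin j k (d j, y))⌉₊ with hmdef
        refine ⟨m, fun k hkj => ?_⟩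
        have hf : 0 < d k - lin j k (d j, y) := by linarith [hy k hkj]
        have h1 : ρ / (d k - lin j k (d j, y)) ≤ (m:ℝ) + 1 := by
          calc ρ / (d k - lin j k (d j, y)) ≤ (⌈ρ / (d k - lin j k (d j, y))⌉₊ : ℝ) :=
                Nat.le_ceil _
            _ ≤ (m:ℝ) := by
                rw [hmdef]
                exact_mod_cast Finset.le_sup (f := fun k => ⌈ρ / (d k - lin j k (d j, y))⌉₊)
                  (Finset.mem_univ k)
            _ ≤ (m:ℝ) + 1 := by linarith
        have h2 : ρ ≤ ((m:ℝ) + 1) * (d k - lin j k (d j, y)) := by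
          rw [div_le_iff₀ hf] at h1
          linarith
        have h3 : ρ / ((m:ℝ) + 1) ≤ d k - lin j k (d j, y) := by
          rw [div_le_iff₀ (by positivity)]
          nlinarith
        linarith
    have hKcnull : volume (K j 0 (d j) \ Kc) = 0 := by
      have hsub2 : K j 0 (d j) \ Kc ⊆
          ⋃ k, {y : Pi2 | k ≠ j ∧ lin j k (d j, y) = d k} := by
        intro y hy
        obtain ⟨hy1, hy2⟩ := hy
        rw [hKcdef, Set.mem_setOf_eq] at hy2
        push_neg at hy2
        obtain ⟨k, hkj, hk⟩ := hy2
        refine Set.mem_iUnion.mpr ⟨k, hkj, ?_⟩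
        have := hy1 k hkj
        simp only [add_zero] at this
        linarith
      refine measure_mono_null hsub2 (measure_iUnion_null fun k => ?_)
      rcases eq_or_ne k j with rfl | hkj
      · convert measure_empty (μ := (volume : Measure Pi2))
        ext y; simp
      · set m : Pi2 := fun i => (b j).repr (N k) i.succ with hmdef
        rcases eq_or_ne m 0 with hm0 | hm0
        · -- parallel case: the set is empty
          have hrepr : (b j).repr (N k) = EuclideanSpace.single 0 ((b j).repr (N k) 0) := by
            ext l
            refine Fin.cases ?_ (fun i => ?_) l
            · simp [EuclideanSpace.single_apply]
            · have := congrFun hm0 i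
              simp only [hmdef, Pi.zero_apply] at this
              simp [EuclideanSpace.single_apply, Fin.succ_ne_zero, this]
          set c : ℝ := (b j).repr (N k) 0 with hcdef
          have hNk : N k = c • N j := by
            apply (b j).repr.injective
            rw [LinearIsometryEquiv.map_smul, hrepr]
            rw [← hb j, (b j).repr_self 0]
            ext l
            simp only [PiLp.smul_apply, EuclideanSpace.single_apply, smul_eq_mul]
            split_ifs <;> simp
          have hc1 : |c| = 1 := by
            have := hN k
            rw [hNk, norm_smul, hN j, mul_one, Real.norm_eq_abs] at this
            exact this
          have hempty : {y : Pi2 | k ≠ j ∧ lin j k ((d j), y) = d k} = ∅ := by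
            ext y
            simp only [Set.mem_setOf_eq, Set.mem_empty_iff_false, iff_false, not_and]
            intro _
            have hval : lin j k (d j, y) = c * d j := by
              rw [hlindef]
              simp only [← hcdef]
              have : ∀ i : Fin 2, (b j).repr (N k) i.succ = 0 := fun i => congrFun hm0 i
              simp [this]
            rw [hval]
            rcases (abs_eq (by norm_num : (0:ℝ) ≤ 1)).mp hc1 with hc | hc
            · intro heq
              apply hkj
              apply hinj
              simp only [Prod.mk.injEq]
              constructor
              · rw [hNk, hc, one_smul]
              · rw [← heq, hc, one_mul]
            · intro heq
              have h1 := hstrict k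
              have h2 := hstrict j
              have hinner : ⟪N k, xb⟫ = -⟪N j, xb⟫ := by
                rw [hNk, hc]; simp
              have hdk : d k = -(d j) := by rw [← heq, hc]; ring
              rw [hinner, hdk] at h1
              linarith
          rw [hempty]
          exact measure_empty
        · -- non-parallel: a genuine line in the plane
          have hset : {y : Pi2 | k ≠ j ∧ lin j k ((d j), y) = d k}
              = {y : Pi2 | ∑ i, m i * y i = d k - (b j).repr (N k) 0 * d j} := by
            ext y
            simp only [Set.mem_setOf_eq, hlindef, hmdef]
            constructor
            · rintro ⟨-, h⟩; linarith
            · intro h; exact ⟨hkj, by linarith⟩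
          rw [hset]
          exact volume_hyperplane m hm0 _
    have hvolKc : volume Kc = J j 0 := by
      apply le_antisymm
      · apply measure_mono
        intro y hy k hkj
        calc lin j k (d j, y) ≤ d k := (hy k hkj).le
          _ ≤ d k + 0 := by linarith
      · calc J j 0 ≤ volume (Kc ∪ (K j 0 (d j) \ Kc)) := by
              apply measure_mono
              intro y hy
              by_cases h : y ∈ Kc
              · exact Or.inl h
              · exact Or.inr ⟨hy, h⟩
          _ ≤ volume Kc + volume (K j 0 (d j) \ Kc) := measure_union_le _ _
          _ = volume Kc := by rw [hKcnull, add_zero]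
    have htend := tendsto_measure_iUnion_atTop (μ := (volume : Measure Pi2)) hmono
    rw [hiUnion, hvolKc] at htend
    rcases le_or_gt (J j 0) (ENNReal.ofReal η) with hle | hlt
    · exact ⟨ρ, hρpos, le_rfl, hle.trans le_add_self⟩
    · have hJ0fin : J j 0 ≠ ⊤ := (hKfin j 0 hρpos.le).ne
      have hblt : J j 0 - ENNReal.ofReal η < J j 0 :=
        ENNReal.sub_lt_self hJ0fin (by
            intro h0
            rw [h0] at hlt
            exact (not_lt_of_ge zero_le) hlt)
          (by simp [hη])
      obtain ⟨m, hm⟩ := (htend.eventually_const_lt hblt).exists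
      refine ⟨ρ / (m + 1), by positivity, ?_, ?_⟩
      · rw [div_le_iff₀ (by positivity)]
        nlinarith [Nat.cast_nonneg (α := ℝ) m, hρpos]
      · rw [← tsub_le_iff_right]
        exact hm.le
  have hJlim : ∀ η : ℝ, 0 < η → ∃ δ : ℝ, 0 < δ ∧ δ ≤ ρ ∧ ∀ j,
      J j δ ≤ J j 0 + ENNReal.ofReal η ∧ J j 0 ≤ J j (-δ) + ENNReal.ofReal η := by
    intro η hη
    choose δp hδp0 hδpρ hδpJ using fun j => hupper j η hη
    choose δm hδm0 hδmρ hδmJ using fun j => hlower j η hη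
    set δ : ℝ := Finset.univ.inf' Finset.univ_nonempty fun j => min (δp j) (δm j) with hδdef
    have hδle : ∀ j, δ ≤ min (δp j) (δm j) := fun j =>
      Finset.inf'_le _ (Finset.mem_univ j)
    refine ⟨δ, ?_, ?_, fun j => ⟨?_, ?_⟩⟩
    · rw [hδdef, Finset.lt_inf'_iff]
      exact fun j _ => lt_min (hδp0 j) (hδm0 j)
    · obtain ⟨j⟩ := (inferInstance : Nonempty (Fin n))
      exact (hδle j).trans ((min_le_left _ _).trans (hδpρ j))
    · exact (hJmono j δ (δp j) ((hδle j).trans (min_le_left _ _))).trans (hδpJ j)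
    · refine (hδmJ j).trans (add_le_add_left ?_ _)
      exact hJmono j (-(δm j)) (-δ) (by
        have := (hδle j).trans (min_le_right _ _)
        linarith)
  -- key directional inequality
  have hkey : ∀ w : E3, 0 ≤ ∑ j, ⟪N j, w⟫ * A j := by
    intro w
    set a : Fin n → ℝ := fun j => ⟪N j, w⟫ with hadef
    set M : ℝ := 1 + ∑ j, |a j| with hMdef
    have hM1 : 1 ≤ M := by
      rw [hMdef]
      have : (0:ℝ) ≤ ∑ j, |a j| := Finset.sum_nonneg fun j _ => abs_nonneg _
      linarith
    have hM0 : 0 < M := by linarith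
    have haM : ∀ j, |a j| ≤ M := by
      intro j
      have h1 : |a j| ≤ ∑ j, |a j| :=
        Finset.single_le_sum (fun i _ => abs_nonneg (a i)) (Finset.mem_univ j)
      linarith
    have hPfin : volume P < ⊤ :=
      lt_of_le_of_lt (measure_mono hR) (isCompact_closedBall 0 R).measure_lt_top
    have hmain : ∀ η : ℝ, 0 < η → -((M + M) * η) ≤ ∑ j, a j * A j := by
      intro η hη
      obtain ⟨δ, hδ0, hδρ, hδJ⟩ := hJlim η hη
      set t : ℝ := δ / (2 * M) with htdef
      have ht0 : 0 < t := div_pos hδ0 (by linarith)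
      have h2tM : t * M + t * M = δ := by
        rw [htdef]; field_simp; ring
      have htMρ : t * M ≤ δ := by nlinarith [ht0, hM0]
      set S : Set E3 := ⋂ i, {x : E3 | ⟪N i, x⟫ ≤ d i + t * a i} with hSdef
      have hSclosed : IsClosed S :=
        isClosed_iInter fun i => isClosed_le (hinnercont (N i)) continuous_const
      have hSmeas : MeasurableSet S := hSclosed.measurableSet
      have hSvol : volume S = volume P := by
        have hSP : S = (t • w) +ᵥ P := by
          ext x
          rw [Set.mem_vadd_set_iff_neg_vadd_mem]
          simp only [hSdef, hPdef, Set.mem_iInter, Set.mem_setOf_eq, vadd_eq_add]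
          refine forall_congr' fun i => ?_
          have hinner : ⟪N i, -(t • w) + x⟫ = ⟪N i, x⟫ - t * a i := by
            rw [inner_add_right, inner_neg_right, real_inner_smul_right, hadef]
            ring
          rw [hinner]
          constructor <;> intro h <;> linarith
        rw [hSP, measure_vadd]
      -- the slab sets
      set W : Fin n → Set E3 := fun j =>
        {x : E3 | ⟪N j, x⟫ ∈ Set.Ioc (d j) (d j + t * a j)} ∩
          ⋂ k, ⋂ (_ : k ≠ j), {x : E3 | ⟪N k, x⟫ ≤ d k + t * M} with hWdef
      set V : Fin n → Set E3 := fun j =>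
        {x : E3 | ⟪N j, x⟫ ∈ Set.Ioc (d j + t * a j) (d j)} ∩
          ⋂ k, ⋂ (_ : k ≠ j), {x : E3 | ⟪N k, x⟫ ≤ d k - t * M} with hVdef
      set TW : Fin n → Set (ℝ × Pi2) := fun j =>
        {p : ℝ × Pi2 | p.1 ∈ Set.Ioc (d j) (d j + t * a j)} ∩
          ⋂ k, ⋂ (_ : k ≠ j), {p : ℝ × Pi2 | lin j k p ≤ d k + t * M} with hTWdef
      set TV : Fin n → Set (ℝ × Pi2) := fun j =>
        {p : ℝ × Pi2 | p.1 ∈ Set.Ioc (d j + t * a j) (d j)} ∩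
          ⋂ k, ⋂ (_ : k ≠ j), {p : ℝ × Pi2 | lin j k p ≤ d k - t * M} with hTVdef
      have hWpre : ∀ j, W j = Phi (b j) ⁻¹' TW j := by
        intro j
        ext x
        simp only [hWdef, hTWdef, Set.mem_inter_iff, Set.mem_preimage, Set.mem_iInter,
          Set.mem_setOf_eq, hPhiP j x]
        refine and_congr Iff.rfl (forall_congr' fun k => forall_congr' fun hk => ?_)
        rw [hlin j k x]
      have hVpre : ∀ j, V j = Phi (b j) ⁻¹' TV j := by
        intro j
        ext x
        simp only [hVdef, hTVdef, Set.mem_inter_iff, Set.mem_preimage, Set.mem_iInter,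
          Set.mem_setOf_eq, hPhiP j x]
        refine and_congr Iff.rfl (forall_congr' fun k => forall_congr' fun hk => ?_)
        rw [hlin j k x]
      have hTWmeas : ∀ j, MeasurableSet (TW j) := by
        intro j
        refine MeasurableSet.inter (measurable_fst measurableSet_Ioc) ?_
        refine MeasurableSet.iInter fun k => MeasurableSet.iInter fun _ => ?_
        exact (isClosed_le (hlincont j k) continuous_const).measurableSet
      have hTVmeas : ∀ j, MeasurableSet (TV j) := by
        intro j
        refine MeasurableSet.inter (measurable_fst measurableSet_Ioc) ?_
        refine MeasurableSet.iInter fun k => MeasurableSet.iInter fun _ => ?_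
        exact (isClosed_le (hlincont j k) continuous_const).measurableSet
      have hWmeas : ∀ j, MeasurableSet (W j) := fun j => by
        rw [hWpre j]; exact (Phi (b j)).measurable (hTWmeas j)
      have hVmeas : ∀ j, MeasurableSet (V j) := fun j => by
        rw [hVpre j]; exact (Phi (b j)).measurable (hTVmeas j)
      have hWvol : ∀ j, 0 < a j → volume (W j) ≤ ENNReal.ofReal (t * a j) * J j δ := by
        intro j haj
        rw [hWpre j,
          (Phi_measurePreserving (b j)).measure_preimage (hTWmeas j).nullMeasurableSet]
        have hsub : TW j ⊆ Set.Ioc (d j) (d j + t * a j) ×ˢ K j δ (d j) := by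
          rintro p ⟨h1, h2⟩
          rw [Set.mem_setOf_eq, Set.mem_Ioc] at h1
          rw [Set.mem_iInter] at h2
          refine ⟨Set.mem_Ioc.mpr h1, fun k hk => ?_⟩
          have h2' : lin j k p ≤ d k + t * M := by
            have h5 := h2 k
            rw [Set.mem_iInter] at h5
            exact h5 hk
          have haj2 : t * a j ≤ t * M :=
            mul_le_mul_of_nonneg_left ((le_abs_self _).trans (haM j)) ht0.le
          have habs : |d j - p.1| ≤ t * M := by
            rw [abs_sub_comm, abs_of_nonneg (by linarith [h1.1] : (0:ℝ) ≤ p.1 - d j)]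
            linarith [h1.2]
          calc lin j k (d j, p.2) ≤ lin j k (p.1, p.2) + |d j - p.1| := hlinlip j k p.1 (d j) p.2
            _ = lin j k p + |d j - p.1| := by rw [Prod.mk.eta]
            _ ≤ d k + t * M + t * M := by linarith
            _ = d k + δ := by linarith [h2tM]
        calc volume (TW j) ≤ volume (Set.Ioc (d j) (d j + t * a j) ×ˢ K j δ (d j)) :=
              measure_mono hsub
          _ = ENNReal.ofReal (t * a j) * J j δ := by
              rw [Measure.volume_eq_prod, Measure.prod_prod, Real.volume_Ioc,
                add_sub_cancel_left]
      have hVvol : ∀ j, a j < 0 → ENNReal.ofReal (t * -(a j)) * J j (-δ) ≤ volume (V j) := by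
        intro j haj
        rw [hVpre j,
          (Phi_measurePreserving (b j)).measure_preimage (hTVmeas j).nullMeasurableSet]
        have hsub : Set.Ioc (d j + t * a j) (d j) ×ˢ K j (-δ) (d j) ⊆ TV j := by
          rintro p ⟨h1, h2⟩
          rw [Set.mem_Ioc] at h1
          refine ⟨Set.mem_Ioc.mpr h1, ?_⟩
          rw [Set.mem_iInter]
          intro k
          rw [Set.mem_iInter]
          intro hk
          have h2' : lin j k (d j, p.2) ≤ d k + -δ := h2 k hk
          have hnegaM : -(a j) ≤ M := by
            have h6 := haM j
            rw [abs_of_neg haj] at h6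
            linarith
          have haj2 : t * -(a j) ≤ t * M :=
            mul_le_mul_of_nonneg_left hnegaM ht0.le
          have habs : |p.1 - d j| ≤ t * M := by
            rw [abs_of_nonpos (by linarith [h1.2] : p.1 - d j ≤ 0)]
            have h7 := h1.1
            linarith
          show lin j k p ≤ d k - t * M
          calc lin j k p = lin j k (p.1, p.2) := by rw [Prod.mk.eta]
            _ ≤ lin j k (d j, p.2) + |p.1 - d j| := hlinlip j k (d j) p.1 p.2
            _ ≤ d k + -δ + t * M := by linarith
            _ = d k - t * M := by linarith [h2tM]
        calc ENNReal.ofReal (t * -(a j)) * J j (-δ)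
            = volume (Set.Ioc (d j + t * a j) (d j) ×ˢ K j (-δ) (d j)) := by
              rw [Measure.volume_eq_prod, Measure.prod_prod, Real.volume_Ioc]
              congr 2
              ring
          _ ≤ volume (TV j) := measure_mono hsub
      set Jp : Finset (Fin n) := Finset.univ.filter fun j => 0 < a j with hJpdef
      set Jm : Finset (Fin n) := Finset.univ.filter fun j => a j < 0 with hJmdef
      have hgain : S \ P ⊆ ⋃ j ∈ Jp, W j := by
        rintro x ⟨hxS, hxP⟩
        rw [hSdef, Set.mem_iInter] at hxS
        rw [hPdef, Set.mem_iInter] at hxP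
        push_neg at hxP
        obtain ⟨jj, hjj⟩ := hxP
        rw [Set.mem_setOf_eq] at hjj
        push_neg at hjj
        have h2 : ⟪N jj, x⟫ ≤ d jj + t * a jj := hxS jj
        have haj : 0 < a jj := by
          by_contra hcon
          push_neg at hcon
          have : t * a jj ≤ 0 := mul_nonpos_of_nonneg_of_nonpos ht0.le hcon
          linarith
        refine Set.mem_biUnion (Finset.mem_filter.mpr ⟨Finset.mem_univ jj, haj⟩) ?_
        refine ⟨Set.mem_Ioc.mpr ⟨hjj, h2⟩, ?_⟩
        rw [Set.mem_iInter]
        intro k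
        rw [Set.mem_iInter]
        intro hk
        have h3 : ⟪N k, x⟫ ≤ d k + t * a k := hxS k
        have h4 : t * a k ≤ t * M := by
          have h5 := haM k
          have h6 : a k ≤ M := (le_abs_self _).trans h5
          nlinarith [ht0.le]
        show ⟪N k, x⟫ ≤ d k + t * M
        linarith
      have hloss : ∀ j ∈ Jm, V j ⊆ P \ S := by
        intro j hj x hx
        obtain ⟨hx1, hx2⟩ := hx
        rw [Set.mem_setOf_eq, Set.mem_Ioc] at hx1
        rw [Set.mem_iInter] at hx2
        constructor
        · rw [hPdef, Set.mem_iInter]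
          intro i
          rcases eq_or_ne i j with rfl | hij
          · exact hx1.2
          · have h8 := hx2 i
            rw [Set.mem_iInter] at h8
            have h1 : ⟪N i, x⟫ ≤ d i - t * M := h8 hij
            show ⟪N i, x⟫ ≤ d i
            have h9 : (0:ℝ) ≤ t * M := by positivity
            linarith
        · intro hxS
          rw [hSdef, Set.mem_iInter] at hxS
          have h1 : ⟪N j, x⟫ ≤ d j + t * a j := hxS j
          linarith [hx1.1]
      have hdisj : (Jm : Set (Fin n)).PairwiseDisjoint V := by
        intro j hj k hk hjk
        rw [Function.onFun, Set.disjoint_left]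
        intro x hxj hxk
        obtain ⟨hxj1, hxj2⟩ := hxj
        obtain ⟨hxk1, hxk2⟩ := hxk
        rw [Set.mem_iInter] at hxj2
        have h1 : ⟪N k, x⟫ ≤ d k - t * M := by
          have h8 := hxj2 k
          rw [Set.mem_iInter] at h8
          exact h8 (Ne.symm hjk)
        rw [Set.mem_setOf_eq, Set.mem_Ioc] at hxk1
        have h2 : d k + t * a k < ⟪N k, x⟫ := hxk1.1
        have hk' : k ∈ Jm := hk
        have h3 : a k < 0 := by
          simp only [hJmdef, Finset.mem_filter] at hk'
          exact hk'.2
        have h4 : -M ≤ a k := by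
          have := haM k
          rw [abs_of_neg h3] at this
          linarith
        have h5 : -(t * M) ≤ t * a k := by nlinarith [ht0.le]
        linarith
      have hdiffeq : volume (P \ S) = volume (S \ P) := by
        have e1 : volume (S ∩ P) + volume (S \ P) = volume S :=
          measure_inter_add_diff S hPmeas
        have e2 : volume (S ∩ P) + volume (P \ S) = volume P := by
          rw [Set.inter_comm]
          exact measure_inter_add_diff P hSmeas
        have hfin : volume (S ∩ P) ≠ ⊤ :=
          (lt_of_le_of_lt (measure_mono Set.inter_subset_right) hPfin).ne
        have e3 : volume (S ∩ P) + volume (P \ S)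
            = volume (S ∩ P) + volume (S \ P) := by
          rw [e1, e2, hSvol]
        exact (ENNReal.add_right_inj hfin).mp e3
      have hchain : ∑ j ∈ Jm, ENNReal.ofReal (t * -(a j)) * J j (-δ)
          ≤ ∑ j ∈ Jp, ENNReal.ofReal (t * a j) * J j δ := by
        calc ∑ j ∈ Jm, ENNReal.ofReal (t * -(a j)) * J j (-δ)
            ≤ ∑ j ∈ Jm, volume (V j) := by
              refine Finset.sum_le_sum fun j hj => hVvol j ?_
              simp only [hJmdef, Finset.mem_filter] at hj
              exact hj.2
          _ = volume (⋃ j ∈ Jm, V j) :=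
              (measure_biUnion_finset hdisj fun j _ => hVmeas j).symm
          _ ≤ volume (P \ S) := measure_mono (Set.iUnion₂_subset hloss)
          _ = volume (S \ P) := hdiffeq
          _ ≤ volume (⋃ j ∈ Jp, W j) := measure_mono hgain
          _ ≤ ∑ j ∈ Jp, volume (W j) := measure_biUnion_finset_le Jp W
          _ ≤ ∑ j ∈ Jp, ENNReal.ofReal (t * a j) * J j δ := by
              refine Finset.sum_le_sum fun j hj => hWvol j ?_
              simp only [hJpdef, Finset.mem_filter] at hj
              exact hj.2
      -- pass to real numbers
      have hJδfin : ∀ j, J j δ ≠ ⊤ := fun j => (hKfin j δ hδρ).ne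
      have hJmδfin : ∀ j, J j (-δ) ≠ ⊤ := fun j => (hKfin j (-δ) (by linarith)).ne
      have hlhs : (∑ j ∈ Jm, ENNReal.ofReal (t * -(a j)) * J j (-δ)).toReal
          = ∑ j ∈ Jm, (t * -(a j)) * (J j (-δ)).toReal := by
        rw [ENNReal.toReal_sum fun j _ => ENNReal.mul_ne_top ENNReal.ofReal_ne_top (hJmδfin j)]
        refine Finset.sum_congr rfl fun j hj => ?_
        have h3 : a j < 0 := by
          simp only [hJmdef, Finset.mem_filter] at hj
          exact hj.2
        rw [ENNReal.toReal_mul, ENNReal.toReal_ofReal (by nlinarith [ht0.le])]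
      have hrhs : (∑ j ∈ Jp, ENNReal.ofReal (t * a j) * J j δ).toReal
          = ∑ j ∈ Jp, (t * a j) * (J j δ).toReal := by
        rw [ENNReal.toReal_sum fun j _ => ENNReal.mul_ne_top ENNReal.ofReal_ne_top (hJδfin j)]
        refine Finset.sum_congr rfl fun j hj => ?_
        have h3 : 0 < a j := by
          simp only [hJpdef, Finset.mem_filter] at hj
          exact hj.2
        rw [ENNReal.toReal_mul, ENNReal.toReal_ofReal (by nlinarith [ht0.le])]
      have hrealchain : ∑ j ∈ Jm, (t * -(a j)) * (J j (-δ)).toReal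
          ≤ ∑ j ∈ Jp, (t * a j) * (J j δ).toReal := by
        rw [← hlhs, ← hrhs]
        refine ENNReal.toReal_mono ?_ hchain
        exact (ENNReal.sum_lt_top.mpr fun j _ =>
          (ENNReal.mul_ne_top ENNReal.ofReal_ne_top (hJδfin j)).lt_top).ne
      have hJup : ∀ j, (J j δ).toReal ≤ A j + η := by
        intro j
        have h1 := (hδJ j).1
        have hfin : J j 0 + ENNReal.ofReal η ≠ ⊤ :=
          ENNReal.add_ne_top.mpr ⟨(hKfin j 0 hρpos.le).ne, ENNReal.ofReal_ne_top⟩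
        have h2 := ENNReal.toReal_mono hfin h1
        rwa [ENNReal.toReal_add (hKfin j 0 hρpos.le).ne ENNReal.ofReal_ne_top,
          ENNReal.toReal_ofReal hη.le] at h2
      have hJlow : ∀ j, A j - η ≤ (J j (-δ)).toReal := by
        intro j
        have h1 := (hδJ j).2
        have hfin : J j (-δ) + ENNReal.ofReal η ≠ ⊤ :=
          ENNReal.add_ne_top.mpr ⟨hJmδfin j, ENNReal.ofReal_ne_top⟩
        have h2 := ENNReal.toReal_mono hfin h1
        rw [ENNReal.toReal_add (hJmδfin j) ENNReal.ofReal_ne_top,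
          ENNReal.toReal_ofReal hη.le] at h2
        linarith [h2]
      have hstep1 : ∑ j ∈ Jm, (t * -(a j)) * (A j - η)
          ≤ ∑ j ∈ Jm, (t * -(a j)) * (J j (-δ)).toReal := by
        refine Finset.sum_le_sum fun j hj => ?_
        have h3 : a j < 0 := by
          simp only [hJmdef, Finset.mem_filter] at hj
          exact hj.2
        exact mul_le_mul_of_nonneg_left (hJlow j) (by nlinarith [ht0.le])
      have hstep2 : ∑ j ∈ Jp, (t * a j) * (J j δ).toReal
          ≤ ∑ j ∈ Jp, (t * a j) * (A j + η) := by
        refine Finset.sum_le_sum fun j hj => ?_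
        have h3 : 0 < a j := by
          simp only [hJpdef, Finset.mem_filter] at hj
          exact hj.2
        exact mul_le_mul_of_nonneg_left (hJup j) (by nlinarith [ht0.le])
      have hIneq : ∑ j ∈ Jm, (-(a j)) * (A j - η) ≤ ∑ j ∈ Jp, (a j) * (A j + η) := by
        have h1 : ∑ j ∈ Jm, (t * -(a j)) * (A j - η) ≤ ∑ j ∈ Jp, (t * a j) * (A j + η) :=
          (hstep1.trans hrealchain).trans hstep2
        have h2 : t * ∑ j ∈ Jm, (-(a j)) * (A j - η) ≤ t * ∑ j ∈ Jp, (a j) * (A j + η) := by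
          rw [Finset.mul_sum, Finset.mul_sum]
          calc ∑ j ∈ Jm, t * ((-(a j)) * (A j - η))
              = ∑ j ∈ Jm, (t * -(a j)) * (A j - η) := by
                refine Finset.sum_congr rfl fun j _ => by ring
            _ ≤ ∑ j ∈ Jp, (t * a j) * (A j + η) := h1
            _ = ∑ j ∈ Jp, t * ((a j) * (A j + η)) := by
                refine Finset.sum_congr rfl fun j _ => by ring
        exact le_of_mul_le_mul_left h2 ht0
      -- split the full sum
      have hsplit : ∑ j, a j * A j = ∑ j ∈ Jp, a j * A j + ∑ j ∈ Jm, a j * A j := by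
        classical
        rw [← Finset.sum_filter_add_sum_filter_not Finset.univ (fun j => 0 < a j)
          (fun j => a j * A j)]
        congr 1
        rw [← Finset.sum_filter_add_sum_filter_not
          (Finset.univ.filter fun j => ¬ 0 < a j) (fun j => a j < 0) (fun j => a j * A j)]
        have hJm' : (Finset.univ.filter fun j => ¬ 0 < a j).filter (fun j => a j < 0) = Jm := by
          ext j
          simp only [Finset.mem_filter, Finset.mem_univ, true_and, hJmdef]
          constructor
          · rintro ⟨_, h⟩; exact h
          · intro h; exact ⟨by linarith, h⟩
        have hzero : ∑ j ∈ (Finset.univ.filter fun j => ¬ 0 < a j).filter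
            (fun j => ¬ a j < 0), a j * A j = 0 := by
          refine Finset.sum_eq_zero fun j hj => ?_
          simp only [Finset.mem_filter, Finset.mem_univ, true_and] at hj
          have : a j = 0 := le_antisymm (not_lt.mp hj.1) (not_lt.mp hj.2)
          rw [this, zero_mul]
        rw [hJm', hzero, add_zero]
      have hbp : ∑ j ∈ Jp, a j ≤ M := by
        calc ∑ j ∈ Jp, a j ≤ ∑ j ∈ Jp, |a j| :=
              Finset.sum_le_sum fun j _ => le_abs_self _
          _ ≤ ∑ j, |a j| :=
              Finset.sum_le_sum_of_subset_of_nonneg (Finset.filter_subset _ _)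
                (fun j _ _ => abs_nonneg _)
          _ ≤ M := by rw [hMdef]; linarith
      have hbm : ∑ j ∈ Jm, (-(a j)) ≤ M := by
        calc ∑ j ∈ Jm, (-(a j)) ≤ ∑ j ∈ Jm, |a j| :=
              Finset.sum_le_sum fun j _ => neg_le_abs _
          _ ≤ ∑ j, |a j| :=
              Finset.sum_le_sum_of_subset_of_nonneg (Finset.filter_subset _ _)
                (fun j _ _ => abs_nonneg _)
          _ ≤ M := by rw [hMdef]; linarith
      have e1 : ∑ j ∈ Jm, (-(a j)) * (A j - η)
          = -(∑ j ∈ Jm, a j * A j) + η * ∑ j ∈ Jm, a j := by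
        calc ∑ j ∈ Jm, (-(a j)) * (A j - η)
            = ∑ j ∈ Jm, (-(a j * A j) + η * a j) :=
              Finset.sum_congr rfl fun j _ => by ring
          _ = -(∑ j ∈ Jm, a j * A j) + η * ∑ j ∈ Jm, a j := by
              rw [Finset.sum_add_distrib, Finset.sum_neg_distrib, ← Finset.mul_sum]
      have e2 : ∑ j ∈ Jp, (a j) * (A j + η)
          = ∑ j ∈ Jp, a j * A j + η * ∑ j ∈ Jp, a j := by
        calc ∑ j ∈ Jp, (a j) * (A j + η)
            = ∑ j ∈ Jp, (a j * A j + η * a j) :=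
              Finset.sum_congr rfl fun j _ => by ring
          _ = ∑ j ∈ Jp, a j * A j + η * ∑ j ∈ Jp, a j := by
              rw [Finset.sum_add_distrib, ← Finset.mul_sum]
      have hb1 : η * ∑ j ∈ Jp, a j ≤ η * M := mul_le_mul_of_nonneg_left hbp hη.le
      have hb2 : -(η * M) ≤ η * ∑ j ∈ Jm, a j := by
        have h3 : -(∑ j ∈ Jm, a j) ≤ M := by
          rw [Finset.sum_neg_distrib] at hbm
          exact hbm
        nlinarith [hη.le]
      rw [hsplit]
      rw [e1, e2] at hIneq
      nlinarith [hη.le]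
    refine le_of_forall_pos_le_add fun ε hε => ?_
    have hMM : 0 < M + M := by linarith
    have h1 := hmain (ε / (M + M)) (by positivity)
    have h2 : (M + M) * (ε / (M + M)) = ε := by field_simp
    rw [h2] at h1
    have : ∑ j, ⟪N j, w⟫ * A j = ∑ j, a j * A j := rfl
    rw [this]
    linarith

  -- conclude the vector identity
  have hzero : ∑ j, A j • N j = 0 := by
    have hkey' : ∀ w : E3, ∑ j, ⟪N j, w⟫ * A j = 0 := by
      intro w
      have h1 := hkey w
      have h2 := hkey (-w)
      simp only [inner_neg_right] at h2
      have : ∑ j, -⟪N j, w⟫ * A j = -∑ j, ⟪N j, w⟫ * A j := by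
        rw [← Finset.sum_neg_distrib]
        congr 1; ext j; ring
      rw [this] at h2
      linarith
    set W : E3 := ∑ j, A j • N j with hWdef
    have : ⟪W, W⟫ = 0 := by
      rw [hWdef]
      rw [sum_inner]
      have : ∀ j, ⟪A j • N j, W⟫ = ⟪N j, W⟫ * A j := by
        intro j
        rw [real_inner_smul_left]; ring
      rw [Finset.sum_congr rfl fun j _ => this j]
      exact hkey' W
    exact inner_self_eq_zero.mp this
  -- final rewriting
  calc ∑ i, (μH[2] (P ∩ {x : E3 | ⟪N i, x⟫ = d i})).toReal • N i
      = ∑ i, (C.toReal * A i) • N i := by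
        refine Finset.sum_congr rfl fun i _ => ?_
        rw [hface i, ENNReal.toReal_mul, ENNReal.coe_toReal]
    _ = C.toReal • ∑ i, A i • N i := by
        rw [Finset.smul_sum]
        refine Finset.sum_congr rfl fun i _ => ?_
        rw [smul_smul]
    _ = 0 := by rw [hzero, smul_zero]

/-- Martingale property of the higher-dimensional analogue of the Dubejko weights:
let `v ∈ ℝ³` be a covered vertex of a covering sphere packing with neighbours
`u 1, …, u n`, whose polyhedron `P` is the bounded intersection of the half-spaces
containing `v` bounded by the common tangent planes (with outward unit normals
`(u i - v)/‖u i - v‖` at distances `d i > 0` from `v`), and let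
`Q i` be the face of `P` in the `i`-th tangent plane, `c i = Area(Q i)/‖u i - v‖`
the edge weights and `π(v) = Σ c i`. Then `Σ (c i / π(v)) • (u i - v) = 0`. -/
theorem sphere_packing_martingale (n : ℕ) (v : EuclideanSpace ℝ (Fin 3))
    (u : Fin n → EuclideanSpace ℝ (Fin 3)) (d : Fin n → ℝ)
    (hne : ∀ i, u i ≠ v) (hd : ∀ i, 0 < d i)
    (hinj : Function.Injective (fun i => (‖u i - v‖⁻¹ • (u i - v), d i)))
    (P : Set (EuclideanSpace ℝ (Fin 3)))
    (hP : P = ⋂ i, {x | ⟪‖u i - v‖⁻¹ • (u i - v), x - v⟫ ≤ d i})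
    (hbdd : Bornology.IsBounded P)
    (hint : (interior P).Nonempty)
    (Q : Fin n → Set (EuclideanSpace ℝ (Fin 3)))
    (hQ : ∀ i, Q i = P ∩ {x | ⟪‖u i - v‖⁻¹ • (u i - v), x - v⟫ = d i})
    (c : Fin n → ℝ)
    (hc : ∀ i, c i = (μH[2] (Q i)).toReal / ‖u i - v‖)
    (hpos : 0 < ∑ i, c i) :
    ∑ i, (c i / ∑ j, c j) • (u i - v) = 0 := by
  set N : Fin n → E3 := fun i => ‖u i - v‖⁻¹ • (u i - v) with hNdef
  have hsub0 : ∀ i, u i - v ≠ 0 := fun i => sub_ne_zero_of_ne (hne i)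
  have hnorm : ∀ i, ‖u i - v‖ ≠ 0 := fun i => norm_ne_zero_iff.mpr (hsub0 i)
  have hNunit : ∀ i, ‖N i‖ = 1 := fun i => norm_smul_inv_norm (hsub0 i)
  set P' : Set E3 := ⋂ i, {x : E3 | ⟪N i, x⟫ ≤ d i} with hP'def
  have hP'eq : P' = (fun x : E3 => x + v) ⁻¹' P := by
    rw [hP, hP'def]
    ext x
    simp only [Set.mem_preimage, Set.mem_iInter, Set.mem_setOf_eq, add_sub_cancel_right,
      hNdef]
  have hbdd' : Bornology.IsBounded P' := by
    obtain ⟨R, hR⟩ := hbdd.subset_closedBall 0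
    refine (Metric.isBounded_closedBall (x := (0:E3)) (r := R + ‖v‖)).subset ?_
    intro x hx
    rw [hP'eq] at hx
    have h1 := hR hx
    rw [Metric.mem_closedBall, dist_zero_right] at h1 ⊢
    calc ‖x‖ = ‖x + v - v‖ := by rw [add_sub_cancel_right]
      _ ≤ ‖x + v‖ + ‖v‖ := norm_sub_le _ _
      _ ≤ R + ‖v‖ := by linarith
  have hint' : (interior P').Nonempty := by
    obtain ⟨x0, hx0⟩ := hint
    refine ⟨x0 - v, ?_⟩
    rw [hP'eq]
    have : (fun x : E3 => x + v) = (Homeomorph.addRight v) := rfl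
    rw [this, ← Homeomorph.preimage_interior]
    exact Set.mem_preimage.mpr (by
      show x0 - v + v ∈ interior P
      rw [sub_add_cancel]
      exact hx0)
  have hcore := core n N d hNunit hinj hbdd' hint'
  have hQ' : ∀ i, (⋂ k, {x : E3 | ⟪N k, x⟫ ≤ d k}) ∩ {x : E3 | ⟪N i, x⟫ = d i}
      = (fun x : E3 => x - v) '' Q i := by
    intro i
    rw [hQ i, hP]
    ext x
    simp only [Set.mem_inter_iff, Set.mem_iInter, Set.mem_setOf_eq, Set.mem_image,
      Set.mem_iInter]
    constructor
    · rintro ⟨h1, h2⟩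
      refine ⟨x + v, ⟨fun k => by simpa using h1 k, by simpa using h2⟩, by
        rw [add_sub_cancel_right]⟩
    · rintro ⟨z, ⟨hz1, hz2⟩, rfl⟩
      have hzv : z - v + v = z := by abel
      constructor
      · intro k
        have := hz1 k
        rw [← hzv] at this ⊢
        simpa using this
      · rw [← hzv] at hz2 ⊢
        simpa using hz2
  have hμ : ∀ i, μH[2] ((⋂ k, {x : E3 | ⟪N k, x⟫ ≤ d k}) ∩ {x : E3 | ⟪N i, x⟫ = d i})
      = μH[2] (Q i) := by
    intro i
    rw [hQ' i]
    have hiso : Isometry (fun x : E3 => x - v) :=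
      Isometry.of_dist_eq fun a b => by
        simp only [dist_eq_norm]
        congr 1
        abel
    exact hiso.hausdorffMeasure_image (Or.inl (by norm_num)) _
  have hsum : ∑ i, c i • (u i - v) = ∑ i, (μH[2] (Q i)).toReal • N i := by
    refine Finset.sum_congr rfl fun i _ => ?_
    rw [hc i, hNdef, smul_smul, div_eq_mul_inv]
  have hzero : ∑ i, (μH[2] (Q i)).toReal • N i = 0 := by
    rw [← hcore]
    exact Finset.sum_congr rfl fun i _ => by rw [hμ i]
  calc ∑ i, (c i / ∑ j, c j) • (u i - v)
      = (∑ j, c j)⁻¹ • ∑ i, c i • (u i - v) := by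
        rw [Finset.smul_sum]
        refine Finset.sum_congr rfl fun i _ => ?_
        rw [smul_smul, div_eq_inv_mul]
    _ = 0 := by rw [hsum, hzero, smul_zero]
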